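/- Let A be an integral domain that is an integral extension of ℤ (e.g., the ring of integers of an algebraic number field), and let R be an integral domain that is essentially of finite type over A (i.e., R is a localization of a finitely generated A-algebra, via a ring homomorphism A → R). Then R is locally Egyptian. -/

import Mathlib

universe u

/-- A commutative ring `D` is *Egyptian* if every nonzero `d : D` is a sum of reciprocals
`d = 1/d₁ + ⋯ + 1/dₙ` of finitely many pairwise distinct nonzero elements `dᵢ` of `D`, the
equality holding in any field in which `D` embeds.  (For an integral domain `D` this is
equivalent to the usual definition, in which the equality is required in the fraction field
of `D`: such an equality holds in one field containing `D` iff it holds in all of them.) -/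
def IsEgyptian (D : Type u) [CommRing D] : Prop :=
  ∀ d : D, d ≠ 0 → ∃ s : Finset D, (∀ i ∈ s, i ≠ 0) ∧
    ∀ (K : Type u) [Field K] (φ : D →+* K), Function.Injective φ →
      φ d = ∑ i ∈ s, (φ i)⁻¹

/-- A domain `D` is *generically Egyptian* if `D[1/f]` is Egyptian for some nonzero `f : D`. -/
def IsGenericallyEgyptian (D : Type u) [CommRing D] : Prop :=
  ∃ f : D, f ≠ 0 ∧ IsEgyptian (Localization.Away f)

/-- A domain `D` is *locally Egyptian* if there is a finite set of generators of the unit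
ideal of `D` such that inverting any one of them yields an Egyptian ring. -/
def IsLocallyEgyptian (D : Type u) [CommRing D] : Prop :=
  ∃ s : Finset D, Ideal.span (s : Set D) = ⊤ ∧
    ∀ f ∈ s, IsEgyptian (Localization.Away f)

set_option linter.unusedSectionVars false

namespace EgyAux

variable {D : Type u} [CommRing D]

/-- weakly Egyptian: sum of a multiset (repetitions allowed) of reciprocals. -/
def WEgy (z : D) : Prop :=
  ∃ L : Multiset D, (∀ d ∈ L, d ≠ 0) ∧
    ∀ (K : Type u) [Field K] (φ : D →+* K), Function.Injective φ →
      φ z = (L.map fun d => (φ d)⁻¹).sum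

lemma WEgy_zero : WEgy (0 : D) :=
  ⟨0, by simp, by intro K _ φ _; simp⟩

lemma WEgy_add {x y : D} (hx : WEgy x) (hy : WEgy y) : WEgy (x + y) := by
  obtain ⟨L, hL, hLs⟩ := hx
  obtain ⟨M, hM, hMs⟩ := hy
  refine ⟨L + M, ?_, ?_⟩
  · intro d hd
    rcases Multiset.mem_add.1 hd with h | h
    · exact hL d h
    · exact hM d h
  · intro K _ φ hφ
    rw [map_add, hLs K φ hφ, hMs K φ hφ, Multiset.map_add, Multiset.sum_add]

lemma WEgy_neg {x : D} (hx : WEgy x) : WEgy (-x) := by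
  obtain ⟨L, hL, hLs⟩ := hx
  refine ⟨L.map (fun d => -d), ?_, ?_⟩
  · intro d hd
    obtain ⟨e, he, rfl⟩ := Multiset.mem_map.1 hd
    exact neg_ne_zero.2 (hL e he)
  · intro K _ φ hφ
    rw [map_neg, hLs K φ hφ, Multiset.map_map]
    have : Multiset.map ((fun d => (φ d)⁻¹) ∘ fun d => -d) L
        = Multiset.map (Neg.neg ∘ fun d => (φ d)⁻¹) L := by
      apply Multiset.map_congr rfl
      intro d _
      simp [inv_neg]
    rw [this, ← Multiset.map_map, Multiset.sum_map_neg']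

lemma WEgy_mul [IsDomain D] {x y : D} (hx : WEgy x) (hy : WEgy y) : WEgy (x * y) := by
  obtain ⟨L, hL, hLs⟩ := hx
  obtain ⟨M, hM, hMs⟩ := hy
  refine ⟨L.bind (fun d => M.map (fun e => d * e)), ?_, ?_⟩
  · intro d hd
    obtain ⟨a, ha, hd'⟩ := Multiset.mem_bind.1 hd
    obtain ⟨b, hb, rfl⟩ := Multiset.mem_map.1 hd'
    exact mul_ne_zero (hL a ha) (hM b hb)
  · intro K _ φ hφ
    rw [map_mul, hLs K φ hφ, hMs K φ hφ, Multiset.map_bind, Multiset.sum_bind]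
    have h1 : ∀ a : D, Multiset.map (fun d => (φ d)⁻¹) (Multiset.map (fun e => a * e) M)
        = Multiset.map (fun e => (φ a)⁻¹ * (φ e)⁻¹) M := by
      intro a
      rw [Multiset.map_map]
      apply Multiset.map_congr rfl
      intro e _
      simp [mul_inv, mul_comm]
    have h2 : Multiset.map (fun a => (Multiset.map (fun d => (φ d)⁻¹)
          (Multiset.map (fun e => a * e) M)).sum) L
        = Multiset.map (fun a => (φ a)⁻¹ * (Multiset.map (fun e => (φ e)⁻¹) M).sum) L := by
      apply Multiset.map_congr rfl
      intro a _
      rw [h1 a, Multiset.sum_map_mul_left]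
    rw [h2, Multiset.sum_map_mul_right]

lemma WEgy_of_mul_eq_one [Nontrivial D] {a b : D} (h : a * b = 1) : WEgy a := by
  refine ⟨{b}, ?_, ?_⟩
  · intro d hd
    rw [Multiset.mem_singleton] at hd
    subst hd
    intro hb0
    rw [hb0, mul_zero] at h
    exact one_ne_zero h.symm
  · intro K _ φ hφ
    have : φ a * φ b = 1 := by rw [← map_mul, h, map_one]
    simp [eq_inv_of_mul_eq_one_left (by rw [mul_comm] at this; exact this)]

lemma WEgy_isUnit [Nontrivial D] {v : D} (hv : IsUnit v) : WEgy v := by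
  obtain ⟨u, rfl⟩ := hv
  exact WEgy_of_mul_eq_one u.mul_inv

lemma WEgy_of_mul_eq_natCast [IsDomain D] {a w : D} (n : ℕ) (hw : w ≠ 0)
    (h : a * w = (n : D)) : WEgy a := by
  refine ⟨Multiset.replicate n w, ?_, ?_⟩
  · intro d hd
    rw [Multiset.eq_of_mem_replicate hd]
    exact hw
  · intro K _ φ hφ
    have hφw : φ w ≠ 0 := fun h0 => hw (hφ (by rw [h0, map_zero]))
    have h1 : φ a * φ w = (n : K) := by rw [← map_mul, h, map_natCast]
    rw [Multiset.map_replicate, Multiset.sum_replicate, nsmul_eq_mul, ← h1,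
      mul_assoc, mul_inv_cancel₀ hφw, mul_one]

lemma WEgy_of_mul_eq_intCast [IsDomain D] {a w : D} (m : ℤ) (hw : w ≠ 0)
    (h : a * w = (m : D)) : WEgy a := by
  rcases le_or_gt 0 m with hm | hm
  · lift m to ℕ using hm
    exact WEgy_of_mul_eq_natCast m hw (by exact_mod_cast h)
  · have h2 : (-a) * w = (((-m).toNat : ℕ) : D) := by
      have h3 : (((-m).toNat : ℕ) : D) = ((-m : ℤ) : D) := by
        rw [← Int.cast_natCast, Int.toNat_of_nonneg (by omega)]
      rw [h3]
      push_cast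
      linear_combination -h
    have := WEgy_of_mul_eq_natCast _ hw h2
    simpa using WEgy_neg this

/-- the subring of weakly Egyptian elements -/
def WEgySubring (D : Type u) [CommRing D] [IsDomain D] : Subring D where
  carrier := {z | WEgy z}
  zero_mem' := WEgy_zero
  one_mem' := WEgy_isUnit isUnit_one
  add_mem' := WEgy_add
  neg_mem' := WEgy_neg
  mul_mem' := WEgy_mul

variable [IsDomain D]

/-- A domain is "splittable" if every reciprocal can be rewritten as a finite sum of
reciprocals of pairwise distinct nonzero elements avoiding any given finite forbidden set. -/
def Sp (D : Type u) [CommRing D] : Prop :=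
  ∀ d : D, d ≠ 0 → ∀ F : Finset D, ∃ s : Finset D,
    (∀ e ∈ s, e ≠ 0) ∧ (∀ e ∈ s, e ∉ F) ∧
    ∀ (K : Type u) [Field K] (φ : D →+* K), Function.Injective φ →
      (φ d)⁻¹ = ∑ e ∈ s, (φ e)⁻¹

lemma pow_inj_of_unit (v : Dˣ) (hv : ∀ k : ℕ, 0 < k → (v : D) ^ k ≠ 1) :
    Function.Injective (fun k : ℕ => (v : D) ^ k) := by
  have key : ∀ j k : ℕ, j < k → (v : D) ^ j = (v : D) ^ k → False := by
    intro j k hjk h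
    have hu : v ^ j = v ^ k := Units.ext (by push_cast; exact h)
    have h1 : v ^ (k - j) * v ^ j = 1 * v ^ j := by
      rw [← pow_add, Nat.sub_add_cancel hjk.le, one_mul, hu]
    have h2 : v ^ (k - j) = 1 := mul_right_cancel h1
    exact hv (k - j) (by omega) (by simpa using congrArg Units.val h2)
  intro j k h
  simp only at h
  rcases lt_trichotomy j k with hc | hc | hc
  · exact absurd h (fun h' => key j k hc h')
  · exact hc
  · exact absurd h.symm (fun h' => key k j hc h')

lemma sp_of_unit (v : Dˣ) (hv : ∀ k : ℕ, 0 < k → (v : D) ^ k ≠ 1) : Sp D := by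
  classical
  intro d hd F
  have hv' : ∀ k : ℕ, 0 < k → ((v⁻¹ : Dˣ) : D) ^ k ≠ 1 := by
    intro k hk h
    apply hv k hk
    have h1 : ((v⁻¹ : Dˣ) ^ k : Dˣ) = 1 := Units.ext (by push_cast; exact h)
    have h2 : (v ^ k : Dˣ) = 1 := by
      have h3 := congrArg (fun w : Dˣ => w⁻¹) h1
      simpa using h3
    simpa using congrArg Units.val h2
  set g₁ : ℕ → D := fun k => (1 - (v : D) ^ k) * d with hg₁
  set g₂ : ℕ → D := fun k => (1 - ((v⁻¹ : Dˣ) : D) ^ k) * d with hg₂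
  have hinj : ∀ (w : Dˣ), (∀ k : ℕ, 0 < k → (w : D) ^ k ≠ 1) →
      Function.Injective (fun k : ℕ => (1 - (w : D) ^ k) * d) := by
    intro w hw j k h
    simp only at h
    have : (w : D) ^ j = (w : D) ^ k := by
      have := mul_right_cancel₀ hd h
      linear_combination -this
    exact pow_inj_of_unit w hw this
  have hfin : (g₁ ⁻¹' (F : Set D) ∪ g₂ ⁻¹' (F : Set D) ∪ {0}).Finite := by
    refine Set.Finite.union (Set.Finite.union ?_ ?_) (Set.finite_singleton 0)
    · exact Set.Finite.preimage (Function.Injective.injOn (hinj v hv)) F.finite_toSet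
    · exact Set.Finite.preimage (Function.Injective.injOn (hinj v⁻¹ hv')) F.finite_toSet
  obtain ⟨k, hk⟩ := hfin.infinite_compl.nonempty
  simp only [Set.mem_compl_iff, Set.mem_union, Set.mem_singleton_iff, not_or] at hk
  obtain ⟨⟨hk1, hk2⟩, hk0⟩ := hk
  have hkpos : 0 < k := Nat.pos_of_ne_zero hk0
  have hvk : (v : D) ^ k ≠ 1 := hv k hkpos
  have hvk' : ((v⁻¹ : Dˣ) : D) ^ k ≠ 1 := hv' k hkpos
  have he1 : g₁ k ≠ 0 := mul_ne_zero (sub_ne_zero.2 (fun h => hvk h.symm)) hd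
  have he2 : g₂ k ≠ 0 := mul_ne_zero (sub_ne_zero.2 (fun h => hvk' h.symm)) hd
  have hne : g₁ k ≠ g₂ k := by
    intro h
    have h' : (v : D) ^ k = ((v⁻¹ : Dˣ) : D) ^ k := by
      have := mul_right_cancel₀ hd h
      linear_combination -this
    have hu : v ^ k = v⁻¹ ^ k := Units.ext (by push_cast; exact h')
    have : v ^ (2 * k) = 1 := by
      rw [two_mul, pow_add]
      nth_rewrite 2 [hu]
      simp [← pow_mul]
    exact hv (2 * k) (by omega) (by rw [← Units.val_one, ← this]; simp)
  refine ⟨{g₁ k, g₂ k}, ?_, ?_, ?_⟩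
  · intro e he
    rcases Finset.mem_insert.1 he with rfl | he
    · exact he1
    · rw [Finset.mem_singleton] at he; subst he; exact he2
  · intro e he
    rcases Finset.mem_insert.1 he with rfl | he
    · exact fun hF => hk1 (by simpa using hF)
    · rw [Finset.mem_singleton] at he; subst he
      exact fun hF => hk2 (by simpa using hF)
  · intro K _ φ hφ
    rw [Finset.sum_insert (by simpa using hne), Finset.sum_singleton]
    set x : K := φ v with hx
    have hxinv : φ ((v⁻¹ : Dˣ) : D) = x⁻¹ := by
      apply eq_inv_of_mul_eq_one_right
      rw [hx, ← map_mul]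
      norm_cast
      simp
    have hx0 : x ≠ 0 := by
      intro h
      have : φ ((v : D) * ((v⁻¹ : Dˣ) : D)) = 1 := by norm_cast; simp
      rw [map_mul, ← hx, h, zero_mul] at this
      exact one_ne_zero this.symm
    have hxk : x ^ k ≠ 1 := by
      intro h
      apply hvk
      apply hφ
      rw [map_pow, ← hx, h, map_one]
    have ht : φ d ≠ 0 := fun h => hd (hφ (by rw [h, map_zero]))
    have hφ1 : φ (g₁ k) = (1 - x ^ k) * φ d := by
      rw [hg₁]; push_cast [map_mul, map_sub, map_one, map_pow]; rw [hx]
    have hφ2 : φ (g₂ k) = (1 - (x⁻¹) ^ k) * φ d := by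
      rw [hg₂]; push_cast [map_mul, map_sub, map_one, map_pow]; rw [hxinv]
    rw [hφ1, hφ2, inv_pow]
    set y : K := x ^ k with hy
    have hy1 : (1 : K) - y ≠ 0 := sub_ne_zero.2 (fun h => hxk h.symm)
    have hy0 : y ≠ 0 := pow_ne_zero _ hx0
    rw [mul_inv, mul_inv, ← add_mul]
    have key : (1 - y)⁻¹ + (1 - y⁻¹)⁻¹ = 1 := by
      have hy' : (1:K) - y⁻¹ = -((1 - y) * y⁻¹) := by field_simp; ring
      rw [hy', inv_neg, mul_inv, inv_inv]
      have h5 : (1-y)⁻¹ + -((1-y)⁻¹ * y) = (1-y)⁻¹ * (1 - y) := by ring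
      rw [h5, inv_mul_cancel₀ hy1]
    rw [key, one_mul]

/-- Repair: turn a multiset of reciprocals (with repeats) into a finset, avoiding `F`. -/
lemma repair (hSp : Sp D) (L : Multiset D) (hL : ∀ d ∈ L, d ≠ 0) (F : Finset D) :
    ∃ s : Finset D, (∀ e ∈ s, e ≠ 0) ∧ (∀ e ∈ s, e ∉ F) ∧
      ∀ (K : Type u) [Field K] (φ : D →+* K), Function.Injective φ →
        (L.map fun d => (φ d)⁻¹).sum = ∑ e ∈ s, (φ e)⁻¹ := by
  classical
  induction L using Multiset.induction_on with
  | empty =>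
    exact ⟨∅, by simp, by simp, by intro K _ φ _; simp⟩
  | cons d L ih =>
    have hd : d ≠ 0 := hL d (Multiset.mem_cons_self d L)
    obtain ⟨s₁, hs₁0, hs₁F, hs₁⟩ := ih (fun e he => hL e (Multiset.mem_cons_of_mem he))
    obtain ⟨s₂, hs₂0, hs₂F, hs₂⟩ := hSp d hd (F ∪ s₁)
    refine ⟨s₁ ∪ s₂, ?_, ?_, ?_⟩
    · intro e he
      rcases Finset.mem_union.1 he with h | h
      · exact hs₁0 e h
      · exact hs₂0 e h
    · intro e he
      rcases Finset.mem_union.1 he with h | h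
      · exact hs₁F e h
      · exact fun hF => hs₂F e h (Finset.mem_union_left _ hF)
    · intro K _ φ hφ
      have hdisj : Disjoint s₁ s₂ := by
        rw [Finset.disjoint_right]
        intro e he₂ he₁
        exact hs₂F e he₂ (Finset.mem_union_right _ he₁)
      rw [Multiset.map_cons, Multiset.sum_cons, hs₁ K φ hφ, hs₂ K φ hφ,
        Finset.union_comm, Finset.sum_union hdisj.symm]

lemma isEgyptian_of (hSp : Sp D) (hgen : ∀ z : D, WEgy z) : IsEgyptian D := by
  intro d hd
  obtain ⟨L, hL0, hLs⟩ := hgen d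
  obtain ⟨s, hs0, _, hs⟩ := repair hSp L hL0 ∅
  exact ⟨s, hs0, fun K _ φ hφ => by rw [hLs K φ hφ, hs K φ hφ]⟩

lemma isEgyptian_of_units (h : ∀ z : D, z ≠ 0 → IsUnit z) : IsEgyptian D := by
  intro d hd
  obtain ⟨u, rfl⟩ := h d hd
  refine ⟨{((u⁻¹ : Dˣ) : D)}, ?_, ?_⟩
  · intro i hi
    rw [Finset.mem_singleton] at hi
    subst hi
    exact Units.ne_zero u⁻¹
  · intro K _ φ hφ
    rw [Finset.sum_singleton]
    apply eq_inv_of_mul_eq_one_right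
    rw [← map_mul]
    norm_cast
    simp

lemma isEgyptian_of_subsingleton (E : Type u) [CommRing E] [Subsingleton E] : IsEgyptian E :=
  fun d hd => absurd (Subsingleton.elim d 0) hd

lemma aeval_trick {C : Type*} [CommRing C] (ψ : C →+* D) (a : D) (ha : a ≠ 0)
    (P : Polynomial C) (hP : P ≠ 0) (hev : Polynomial.eval₂ ψ a P = 0) :
    ∃ (w : D) (c : C), c ≠ 0 ∧ a * w = ψ c := by
  obtain ⟨n, hd⟩ : ∃ n, P.natDegree = n := ⟨_, rfl⟩
  induction n using Nat.strong_induction_on generalizing P with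
  | _ n ih =>
  by_cases h0 : P.coeff 0 = 0
  · have hX : Polynomial.X * P.divX = P := by
      conv_rhs => rw [← Polynomial.X_mul_divX_add P]
      rw [h0, map_zero, add_zero]
    have hdiv0 : P.divX ≠ 0 := by
      intro h; apply hP; rw [← hX, h, mul_zero]
    have hev' : Polynomial.eval₂ ψ a P.divX = 0 := by
      have h2 : Polynomial.eval₂ ψ a (Polynomial.X * P.divX) = 0 := by rw [hX]; exact hev
      rw [Polynomial.eval₂_mul, Polynomial.eval₂_X] at h2
      exact (mul_eq_zero.1 h2).resolve_left ha
    have hpos : 0 < P.natDegree := by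
      rcases Nat.eq_zero_or_pos P.natDegree with h | h
      · exfalso
        apply hP
        rw [Polynomial.eq_C_of_natDegree_eq_zero h, h0, map_zero]
      · exact h
    have hlt : P.divX.natDegree < n := by
      rw [Polynomial.natDegree_divX_eq_natDegree_tsub_one]
      omega
    exact ih _ hlt P.divX hdiv0 hev' rfl
  · refine ⟨-Polynomial.eval₂ ψ a P.divX, P.coeff 0, h0, ?_⟩
    have h1 := Polynomial.X_mul_divX_add P
    have h2 := congrArg (Polynomial.eval₂ ψ a) h1
    rw [Polynomial.eval₂_add, Polynomial.eval₂_mul, Polynomial.eval₂_X,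
      Polynomial.eval₂_C, hev] at h2
    linear_combination -h2

lemma char_cases (E : Type u) [CommRing E] [IsDomain E] :
    Function.Injective (Int.cast : ℤ → E) ∨ ∃ p : ℕ, p.Prime ∧ CharP E p := by
  obtain ⟨p, hp⟩ := CharP.exists E
  rcases CharP.char_is_prime_or_zero E p with h | h
  · right; exact ⟨p, h, hp⟩
  · left
    subst h
    haveI : CharZero E := CharP.charP_to_charZero E
    exact Int.cast_injective

lemma isUnit_of_annihilated_charP (p : ℕ) [hp : Fact p.Prime] [CharP D p] {a : D} (ha : a ≠ 0)
    (Q : Polynomial (ZMod p)) (hQ0 : Q ≠ 0)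
    (hQev : Polynomial.eval₂ (ZMod.castHom dvd_rfl D) a Q = 0) : IsUnit a := by
  obtain ⟨w, c, hc, hac⟩ := aeval_trick (ZMod.castHom dvd_rfl D) a ha Q hQ0 hQev
  have hu : IsUnit ((ZMod.castHom dvd_rfl D) c) := (hc.isUnit).map (ZMod.castHom dvd_rfl D)
  exact isUnit_of_mul_isUnit_left (hac ▸ hu)

lemma annihilator_ZMod (p : ℕ) [CharP D p] {x : D}
    (P : Polynomial ℤ) (hmon : P.Monic)
    (hev : Polynomial.eval₂ (Int.castRingHom D) x P = 0) :
    ∃ Q : Polynomial (ZMod p), Q.Monic ∧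
      Polynomial.eval₂ (ZMod.castHom dvd_rfl D) x Q = 0 := by
  refine ⟨P.map (Int.castRingHom (ZMod p)), hmon.map _, ?_⟩
  rw [Polynomial.eval₂_map]
  have h3 : (ZMod.castHom dvd_rfl D).comp (Int.castRingHom (ZMod p)) = Int.castRingHom D :=
    Subsingleton.elim _ _
  rw [h3]
  exact hev

lemma isUnit_of_isIntegral_charP (p : ℕ) [hp : Fact p.Prime] [CharP D p] {a : D} (ha : a ≠ 0)
    (P : Polynomial ℤ) (hmon : P.Monic)
    (hev : Polynomial.eval₂ (Int.castRingHom D) a P = 0) : IsUnit a := by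
  obtain ⟨Q, hQmon, hQev⟩ := annihilator_ZMod p P hmon hev
  exact isUnit_of_annihilated_charP p ha Q hQmon.ne_zero hQev

lemma exists_mul_eq_int_char0 (hinj : Function.Injective (Int.cast : ℤ → D)) {a : D}
    (ha : a ≠ 0) (P : Polynomial ℤ) (hmon : P.Monic)
    (hev : Polynomial.eval₂ (Int.castRingHom D) a P = 0) :
    ∃ (w : D) (m : ℤ), w ≠ 0 ∧ ((m : D) ≠ 0) ∧ a * w = (m : D) := by
  obtain ⟨w, m, hm, haw⟩ := aeval_trick (Int.castRingHom D) a ha P hmon.ne_zero hev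
  have hm' : ((m : ℤ) : D) ≠ 0 := fun h => hm (hinj (by simpa using h))
  have hw : w ≠ 0 := by
    rintro rfl
    rw [mul_zero] at haw
    exact hm' haw.symm
  exact ⟨w, m, hw, hm', haw⟩

lemma isIntegral_of_pow_eq_one {S : Type*} [CommRing S] [Algebra S D] {x : D} {k : ℕ}
    (hk : 0 < k) (hx : x ^ k = 1) : IsIntegral S x := by
  refine ⟨Polynomial.X ^ k - Polynomial.C 1, Polynomial.monic_X_pow_sub_C 1 hk.ne', ?_⟩
  rw [Polynomial.eval₂_sub, Polynomial.eval₂_X_pow, Polynomial.eval₂_C, map_one, hx, sub_self]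

end EgyAux

namespace EgyAux

lemma gen_top {R : Type u} [CommRing R] [IsDomain R] {A : Type*} [CommRing A] [Algebra A R]
    (σ : Finset R)
    (hσ : ∀ r : R, ∃ t ∈ Algebra.adjoin A (σ : Set R), IsUnit t ∧
      r * t ∈ Algebra.adjoin A (σ : Set R))
    (f : R)
    (W : Subring (Localization.Away f))
    (hA : ∀ a : A, algebraMap R (Localization.Away f) (algebraMap A R a) ∈ W)
    (hσW : ∀ x ∈ σ, ∃ (g : R) (m : ℤ),
      IsUnit (algebraMap R (Localization.Away f) g) ∧ x = g + (m : R))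
    (hU : ∀ v : (Localization.Away f)ˣ, ((v : Localization.Away f) ∈ W ∧
      ((v⁻¹ : (Localization.Away f)ˣ) : Localization.Away f) ∈ W)) :
    W = ⊤ := by
  set D := Localization.Away f
  set ι : R →+* D := algebraMap R D with hι
  have step1 : ∀ b ∈ Algebra.adjoin A (σ : Set R), ι b ∈ W := by
    intro b hb
    induction hb using Algebra.adjoin_induction with
    | mem x hx =>
      obtain ⟨g, m, hg, rfl⟩ := hσW x hx
      rw [map_add]
      refine W.add_mem ((hU hg.unit).1) ?_
      rw [map_intCast]
      exact intCast_mem W m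
    | algebraMap a => exact hA a
    | add x y _ _ hx hy => rw [map_add]; exact W.add_mem hx hy
    | mul x y _ _ hx hy => rw [map_mul]; exact W.mul_mem hx hy
  have step2 : ∀ r : R, ι r ∈ W := by
    intro r
    obtain ⟨t, ht, htu, hrt⟩ := hσ r
    have hv : IsUnit (ι t) := htu.map ι
    have : ι r = ι (r * t) * ((hv.unit⁻¹ : Dˣ) : D) := by
      rw [Units.eq_mul_inv_iff_mul_eq, hv.unit_spec, ← map_mul]
    rw [this]
    exact W.mul_mem (step1 _ hrt) (hU hv.unit).2
  rw [eq_top_iff]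
  rintro z -
  obtain ⟨⟨r, m⟩, hz⟩ := IsLocalization.surj (Submonoid.powers f) z
  have hmu : IsUnit (ι (m : R)) := IsLocalization.map_units D m
  have : z = ι r * ((hmu.unit⁻¹ : Dˣ) : D) := by
    rw [Units.eq_mul_inv_iff_mul_eq, hmu.unit_spec]
    exact hz
  rw [this]
  exact W.mul_mem (step2 r) (hU hmu.unit).2

lemma one_mem_span {R : Type u} [CommRing R] [DecidableEq R] (σ : Finset R) :
    (1 : R) ∈ Ideal.span ((σ.powerset.image
      (fun τ => ∏ x ∈ σ, (x + if x ∈ τ then 1 else 0)) : Finset R) : Set R) := by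
  induction σ using Finset.induction_on with
  | empty =>
    apply Ideal.subset_span
    simp
  | @insert y σ hy ih =>
    set J := Ideal.span (((insert y σ).powerset.image
      (fun τ => ∏ x ∈ insert y σ, (x + if x ∈ τ then 1 else 0)) : Finset R) : Set R) with hJ
    have hmem : ∀ τ ∈ σ.powerset, (∏ x ∈ σ, (x + if x ∈ τ then 1 else 0)) ∈ J := by
      intro τ hτ
      rw [Finset.mem_powerset] at hτ
      have hyτ : y ∉ τ := fun h => hy (hτ h)
      have h1 : (∏ x ∈ insert y σ, (x + if x ∈ τ then 1 else 0))
          = y * ∏ x ∈ σ, (x + if x ∈ τ then 1 else 0) := by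
        rw [Finset.prod_insert hy, if_neg hyτ, add_zero]
      have h2 : (∏ x ∈ insert y σ, (x + if x ∈ insert y τ then 1 else 0))
          = (y + 1) * ∏ x ∈ σ, (x + if x ∈ τ then 1 else 0) := by
        rw [Finset.prod_insert hy, if_pos (Finset.mem_insert_self y τ)]
        congr 1
        apply Finset.prod_congr rfl
        intro x hx
        congr 1
        have hxy : x ≠ y := fun h => hy (h ▸ hx)
        by_cases hxτ : x ∈ τ
        · rw [if_pos (Finset.mem_insert_of_mem hxτ), if_pos hxτ]
        · rw [if_neg (fun h => hxτ ((Finset.mem_insert.1 h).resolve_left hxy)), if_neg hxτ]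
      have hJ1 : y * ∏ x ∈ σ, (x + if x ∈ τ then 1 else 0) ∈ J := by
        rw [← h1]
        apply Ideal.subset_span
        simp only [Finset.coe_image, Set.mem_image, Finset.mem_coe]
        exact ⟨τ, Finset.mem_powerset.2 (hτ.trans (Finset.subset_insert y σ)), rfl⟩
      have hJ2 : (y + 1) * ∏ x ∈ σ, (x + if x ∈ τ then 1 else 0) ∈ J := by
        rw [← h2]
        apply Ideal.subset_span
        simp only [Finset.coe_image, Set.mem_image, Finset.mem_coe]
        exact ⟨insert y τ, Finset.mem_powerset.2 (Finset.insert_subset_insert y hτ), rfl⟩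
      have h3 : (∏ x ∈ σ, (x + if x ∈ τ then 1 else 0))
          = (y + 1) * (∏ x ∈ σ, (x + if x ∈ τ then 1 else 0))
            - y * (∏ x ∈ σ, (x + if x ∈ τ then 1 else 0)) := by ring
      rw [h3]
      exact J.sub_mem hJ2 hJ1
    have hle : Ideal.span ((σ.powerset.image
        (fun τ => ∏ x ∈ σ, (x + if x ∈ τ then 1 else 0)) : Finset R) : Set R) ≤ J := by
      rw [Ideal.span_le]
      intro g hg
      simp only [Finset.coe_image, Set.mem_image, Finset.mem_coe] at hg
      obtain ⟨τ, hτ, rfl⟩ := hg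
      exact hmem τ hτ
    exact hle ih

end EgyAux
namespace EgyAux

lemma key {A : Type*} [CommRing A] [IsDomain A] [Algebra.IsIntegral ℤ A]
    {R : Type u} [CommRing R] [IsDomain R] [Algebra A R] [DecidableEq R]
    (σ : Finset R)
    (hσ : ∀ r : R, ∃ t ∈ Algebra.adjoin A (σ : Set R), IsUnit t ∧
      r * t ∈ Algebra.adjoin A (σ : Set R))
    (c : ℕ) (hc : 2 ≤ c) (τ : Finset R) :
    IsEgyptian (Localization.Away
      ((c : R) * ∏ x ∈ σ, (x + if x ∈ τ then 1 else 0))) := by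
  set G : R := ∏ x ∈ σ, (x + if x ∈ τ then 1 else 0) with hGdef
  set f : R := (c : R) * G with hfdef
  by_cases hf : f = 0
  · haveI : Subsingleton (Localization.Away f) :=
      IsLocalization.subsingleton (M := Submonoid.powers f) ⟨1, by simp [hf]⟩
    exact isEgyptian_of_subsingleton _
  haveI hdom : IsDomain (Localization.Away f) :=
    IsLocalization.isDomain_localization (powers_le_nonZeroDivisors_of_noZeroDivisors hf)
  set ι : R →+* (Localization.Away f) := algebraMap R (Localization.Away f) with hι
  have hfu : IsUnit (ι f) :=
    IsLocalization.map_units (M := Submonoid.powers f) _ ⟨f, Submonoid.mem_powers f⟩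
  have hGf : ι f = ((c : ℕ) : Localization.Away f) * ι G := by
    have h0 : ι f = ι ((c : R) * G) := rfl
    rw [h0, map_mul, map_natCast]
  have hcu : IsUnit ((c : ℕ) : Localization.Away f) := by
    apply isUnit_of_mul_isUnit_left (y := ι G)
    rw [← hGf]; exact hfu
  have hGu : IsUnit (ι G) := by
    apply isUnit_of_mul_isUnit_right (x := ((c : ℕ) : Localization.Away f))
    rw [← hGf]; exact hfu
  have hσW : ∀ x ∈ σ, ∃ (g : R) (m : ℤ), IsUnit (ι g) ∧ x = g + (m : R) := by
    intro x hx
    refine ⟨x + (if x ∈ τ then 1 else 0), -(if x ∈ τ then 1 else 0 : ℤ), ?_, ?_⟩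
    · have h5 : (x + (if x ∈ τ then 1 else 0))
          * ∏ y ∈ σ.erase x, (y + if y ∈ τ then 1 else 0)
          = ∏ y ∈ σ, (y + if y ∈ τ then 1 else 0) :=
        Finset.mul_prod_erase σ (fun y => y + if y ∈ τ then 1 else 0) hx
      have h5' : (x + (if x ∈ τ then 1 else 0))
          * ∏ y ∈ σ.erase x, (y + if y ∈ τ then 1 else 0) = G := h5
      apply isUnit_of_mul_isUnit_left (y := ι (∏ y ∈ σ.erase x, (y + if y ∈ τ then 1 else 0)))
      rw [← map_mul, h5']
      exact hGu
    · push_cast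
      split_ifs <;> ring
  have hAint : ∀ a : A, ∃ P : Polynomial ℤ, P.Monic ∧
      Polynomial.eval₂ (Int.castRingHom (Localization.Away f)) (ι (algebraMap A R a)) P = 0 := by
    intro a
    obtain ⟨P, hmon, hev⟩ := Algebra.IsIntegral.isIntegral (R := ℤ) a
    refine ⟨P, hmon, ?_⟩
    have h7 := congrArg (ι.comp (algebraMap A R)) hev
    rw [Polynomial.hom_eval₂, map_zero] at h7
    have h8 : (ι.comp (algebraMap A R)).comp (algebraMap ℤ A)
        = Int.castRingHom (Localization.Away f) := Subsingleton.elim _ _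
    rw [h8] at h7
    simpa using h7
  rcases char_cases (Localization.Away f) with hinj | ⟨p, hp, hcharp⟩
  · -- characteristic zero
    have hA : ∀ a : A, ι (algebraMap A R a) ∈ WEgySubring (Localization.Away f) := by
      intro a
      by_cases h0 : ι (algebraMap A R a) = 0
      · rw [h0]; exact WEgy_zero
      · obtain ⟨P, hmon, hev⟩ := hAint a
        obtain ⟨w, m, hw, hm, haw⟩ := exists_mul_eq_int_char0 hinj h0 P hmon hev
        exact WEgy_of_mul_eq_intCast m hw haw
    have hW : WEgySubring (Localization.Away f) = ⊤ :=
      gen_top σ hσ f _ hA hσW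
        (fun v => ⟨WEgy_isUnit v.isUnit, WEgy_isUnit (v⁻¹).isUnit⟩)
    obtain ⟨u, hu⟩ := hcu
    have hvinf : ∀ k : ℕ, 0 < k → ((u : Localization.Away f)) ^ k ≠ 1 := by
      intro k hk h
      rw [hu] at h
      have h7 : (((c ^ k : ℕ) : ℤ) : Localization.Away f) = ((1 : ℤ) : Localization.Away f) := by
        push_cast
        simpa using h
      have h8 := hinj h7
      have h9 : c ^ k = 1 := by exact_mod_cast h8
      have h10 : c ≤ c ^ k := Nat.le_self_pow hk.ne' c
      omega
    apply isEgyptian_of (sp_of_unit u hvinf)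
    intro z
    have hz : z ∈ WEgySubring (Localization.Away f) := by rw [hW]; exact Subring.mem_top z
    exact hz
  · -- characteristic p
    haveI := hcharp
    haveI : Fact p.Prime := ⟨hp⟩
    by_cases hfin : ∀ v : (Localization.Away f)ˣ, ∃ k : ℕ, 0 < k ∧
        ((v : Localization.Away f)) ^ k = 1
    · -- all units of finite order: everything is integral over 𝔽_p, hence a unit
      letI : Algebra (ZMod p) (Localization.Away f) := ZMod.algebra _ p
      have hWi : (integralClosure (ZMod p) (Localization.Away f)).toSubring = ⊤ := by
        apply gen_top σ hσ f
        · intro a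
          obtain ⟨P, hmon, hev⟩ := hAint a
          obtain ⟨Q, hQmon, hQev⟩ := annihilator_ZMod p P hmon hev
          have h3 : (ZMod.castHom dvd_rfl (Localization.Away f))
              = algebraMap (ZMod p) (Localization.Away f) := Subsingleton.elim _ _
          exact ⟨Q, hQmon, by rw [← h3]; exact hQev⟩
        · exact hσW
        · intro v
          obtain ⟨k, hk, hvk⟩ := hfin v
          have hvk' : ((v⁻¹ : (Localization.Away f)ˣ) : Localization.Away f) ^ k = 1 := by
            have h6 : ((v⁻¹ : (Localization.Away f)ˣ) : Localization.Away f) ^ k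
                * ((v : Localization.Away f)) ^ k = 1 := by
              rw [← mul_pow]
              norm_cast
              simp
            rwa [hvk, mul_one] at h6
          exact ⟨isIntegral_of_pow_eq_one hk hvk, isIntegral_of_pow_eq_one hk hvk'⟩
      apply isEgyptian_of_units
      intro z hz
      have hzint : IsIntegral (ZMod p) z := by
        have h8 : z ∈ (integralClosure (ZMod p) (Localization.Away f)).toSubring := by
          rw [hWi]; exact Subring.mem_top z
        exact h8
      obtain ⟨Q, hQmon, hQev⟩ := hzint
      have h3 : (ZMod.castHom dvd_rfl (Localization.Away f))
          = algebraMap (ZMod p) (Localization.Away f) := Subsingleton.elim _ _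
      exact isUnit_of_annihilated_charP p hz Q hQmon.ne_zero (by rw [h3]; exact hQev)
    · -- some unit of infinite order
      push_neg at hfin
      obtain ⟨v, hv⟩ := hfin
      have hvinf : ∀ k : ℕ, 0 < k → ((v : Localization.Away f)) ^ k ≠ 1 :=
        fun k hk h => (hv k hk) h
      have hA : ∀ a : A, ι (algebraMap A R a) ∈ WEgySubring (Localization.Away f) := by
        intro a
        by_cases h0 : ι (algebraMap A R a) = 0
        · rw [h0]; exact WEgy_zero
        · obtain ⟨P, hmon, hev⟩ := hAint a
          exact WEgy_isUnit (isUnit_of_isIntegral_charP p h0 P hmon hev)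
      have hW : WEgySubring (Localization.Away f) = ⊤ :=
        gen_top σ hσ f _ hA hσW
          (fun w => ⟨WEgy_isUnit w.isUnit, WEgy_isUnit (w⁻¹).isUnit⟩)
      apply isEgyptian_of (sp_of_unit v hvinf)
      intro z
      have hz : z ∈ WEgySubring (Localization.Away f) := by rw [hW]; exact Subring.mem_top z
      exact hz

end EgyAux

theorem statement12 (A : Type*) [CommRing A] [IsDomain A]
    (hZA : Function.Injective (algebraMap ℤ A)) [Algebra.IsIntegral ℤ A]
    (R : Type u) [CommRing R] [IsDomain R]
    [Algebra A R] [Algebra.EssFiniteType A R] :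
    IsLocallyEgyptian R := by
  haveI : DecidableEq R := Classical.decEq R
  obtain ⟨σ, hσ⟩ := (Algebra.essFiniteType_iff A R).1 inferInstance
  refine ⟨(σ.powerset.image fun τ => ((2 : ℕ) : R) * ∏ x ∈ σ, (x + if x ∈ τ then 1 else 0))
    ∪ (σ.powerset.image fun τ => ((3 : ℕ) : R) * ∏ x ∈ σ, (x + if x ∈ τ then 1 else 0)),
    ?_, ?_⟩
  · -- the chosen elements generate the unit ideal
    rw [Ideal.eq_top_iff_one]
    set S : Set R := ↑((σ.powerset.image
        fun τ => ((2 : ℕ) : R) * ∏ x ∈ σ, (x + if x ∈ τ then 1 else 0))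
      ∪ (σ.powerset.image fun τ => ((3 : ℕ) : R) * ∏ x ∈ σ, (x + if x ∈ τ then 1 else 0)))
      with hS
    have hle : Ideal.span ((σ.powerset.image
        (fun τ => ∏ x ∈ σ, (x + if x ∈ τ then 1 else 0)) : Finset R) : Set R)
        ≤ Ideal.span S := by
      rw [Ideal.span_le]
      intro g hg
      simp only [Finset.coe_image, Set.mem_image, Finset.mem_coe] at hg
      obtain ⟨τ, hτ, rfl⟩ := hg
      have h2 : ((2 : ℕ) : R) * ∏ x ∈ σ, (x + if x ∈ τ then 1 else 0) ∈ Ideal.span S := by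
        apply Ideal.subset_span
        rw [hS]
        push_cast [Finset.coe_union, Finset.coe_image]
        left
        exact ⟨τ, by simpa using hτ, rfl⟩
      have h3 : ((3 : ℕ) : R) * ∏ x ∈ σ, (x + if x ∈ τ then 1 else 0) ∈ Ideal.span S := by
        apply Ideal.subset_span
        rw [hS]
        push_cast [Finset.coe_union, Finset.coe_image]
        right
        exact ⟨τ, by simpa using hτ, rfl⟩
      have h4 : (∏ x ∈ σ, (x + if x ∈ τ then 1 else 0))
          = 2 * (((2 : ℕ) : R) * ∏ x ∈ σ, (x + if x ∈ τ then 1 else 0))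
            - (((3 : ℕ) : R) * ∏ x ∈ σ, (x + if x ∈ τ then 1 else 0)) := by
        push_cast
        ring
      rw [h4]
      exact Ideal.sub_mem _ (Ideal.mul_mem_left _ _ h2) h3
    exact hle (EgyAux.one_mem_span σ)
  · intro f hf
    rcases Finset.mem_union.1 hf with hmem | hmem <;>
      obtain ⟨τ, hτ, rfl⟩ := Finset.mem_image.1 hmem
    · exact EgyAux.key σ hσ 2 (le_refl 2) τ
    · exact EgyAux.key σ hσ 3 (by norm_num) τ
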